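/- For x > 0 set h(x) = x/(e^x − 1) and H(x) = x/(1 − e^{−x}). Then 0 < h(x) < 1 < H(x), and the functions u, U defined implicitly by t·e^{1−t} = e^{−y} (with u < 1 < U) satisfy u(log ρ(x)) = h(x) and U(log ρ(x)) = H(x), where ρ(x) = exp(h(x))/(e·h(x)). -/

import Mathlib

open Real

noncomputable def rhoFun (x : ℝ) : ℝ :=
  Real.exp (x / (Real.exp x - 1)) / (Real.exp 1 * (x / (Real.exp x - 1)))

private lemma fderiv_aux (t : ℝ) :
    HasDerivAt (fun t : ℝ => t * Real.exp (1 - t)) ((1 - t) * Real.exp (1 - t)) t := by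
  have h1 : HasDerivAt (fun t : ℝ => 1 - t) (-1) t := (hasDerivAt_id t).const_sub 1
  have h2 := h1.exp
  have h3 : HasDerivAt (fun t : ℝ => t * Real.exp (1 - t))
      (1 * Real.exp (1 - t) + t * (Real.exp (1 - t) * -1)) t := (hasDerivAt_id t).mul h2
  convert h3 using 1
  ring

private lemma fmono : StrictMonoOn (fun t : ℝ => t * Real.exp (1 - t)) (Set.Icc 0 1) := by
  apply strictMonoOn_of_deriv_pos (convex_Icc 0 1)
  · exact (continuous_id.mul (continuous_const.sub continuous_id).rexp).continuousOn
  · intro t ht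
    rw [interior_Icc] at ht
    rw [(fderiv_aux t).deriv]
    exact mul_pos (by linarith [ht.2]) (Real.exp_pos _)

private lemma fanti : StrictAntiOn (fun t : ℝ => t * Real.exp (1 - t)) (Set.Ici 1) := by
  apply strictAntiOn_of_deriv_neg (convex_Ici 1)
  · exact (continuous_id.mul (continuous_const.sub continuous_id).rexp).continuousOn
  · intro t ht
    rw [interior_Ici] at ht
    rw [(fderiv_aux t).deriv]
    exact mul_neg_of_neg_of_pos (by simp at ht; linarith) (Real.exp_pos _)

private lemma inv_rho_aux (h : ℝ) (_hp : 0 < h) :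
    (Real.exp h / (Real.exp 1 * h))⁻¹ = h * Real.exp (1 - h) := by
  rw [inv_div, Real.exp_sub]
  field_simp

private lemma H_eq_aux (x : ℝ) (hx : 0 < x) :
    x / (1 - Real.exp (-x)) = x / (Real.exp x - 1) + x := by
  have hex : x + 1 < Real.exp x := Real.add_one_lt_exp (ne_of_gt hx)
  have hden : (0:ℝ) < Real.exp x - 1 := by linarith
  have hin : (0:ℝ) < 1 - (Real.exp x)⁻¹ := by
    have h1 : (Real.exp x)⁻¹ < 1 := inv_lt_one_of_one_lt₀ (by linarith)
    linarith
  rw [Real.exp_neg]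
  field_simp
  ring

theorem watson_u_U_of_rho (u U : ℝ → ℝ)
    (hu : ∀ y ≥ 0, u y ∈ Set.Ioc (0 : ℝ) 1 ∧ u y * Real.exp (1 - u y) = Real.exp (-y))
    (hU : ∀ y ≥ 0, U y ∈ Set.Ici (1 : ℝ) ∧ U y * Real.exp (1 - U y) = Real.exp (-y)) :
    ∀ x > 0,
      0 < x / (Real.exp x - 1) ∧ x / (Real.exp x - 1) < 1 ∧
      1 < x / (1 - Real.exp (-x)) ∧
      u (Real.log (rhoFun x)) = x / (Real.exp x - 1) ∧
      U (Real.log (rhoFun x)) = x / (1 - Real.exp (-x)) := by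
  intro x hx
  have hex : x + 1 < Real.exp x := Real.add_one_lt_exp (ne_of_gt hx)
  have hden : 0 < Real.exp x - 1 := by linarith
  set h := x / (Real.exp x - 1) with hh
  have hrho : rhoFun x = Real.exp h / (Real.exp 1 * h) := by rw [hh]; rfl
  clear_value h
  have hpos : 0 < h := by rw [hh]; exact div_pos hx hden
  have hlt1 : h < 1 := by rw [hh]; exact (div_lt_one hden).2 (by linarith)
  have hxh : h * (Real.exp x - 1) = x := by rw [hh]; exact div_mul_cancel₀ x (ne_of_gt hden)
  have hfx : h + x = h * Real.exp x := by linear_combination -hxh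
  -- H
  have hexn : Real.exp (-x) < 1 := by
    rw [Real.exp_lt_one_iff]; linarith
  have hexn2 : 1 - x < Real.exp (-x) := by
    have := Real.add_one_lt_exp (show -x ≠ 0 by linarith)
    linarith
  have hdn : 0 < 1 - Real.exp (-x) := by linarith
  set H := x / (1 - Real.exp (-x)) with hH
  have hHgt : 1 < H := (one_lt_div hdn).2 (by linarith)
  have hHeq : H = h + x := by rw [hH, hh]; exact H_eq_aux x hx
  -- rho and y
  have hrpos : 0 < rhoFun x := by
    rw [hrho]
    exact div_pos (Real.exp_pos _) (mul_pos (Real.exp_pos 1) hpos)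
  set y := Real.log (rhoFun x) with hy
  have hfy : Real.exp (-y) = h * Real.exp (1 - h) := by
    rw [hy, Real.exp_neg, Real.exp_log hrpos, hrho]
    exact inv_rho_aux h hpos
  have hy0 : 0 ≤ y := by
    apply Real.log_nonneg
    rw [hrho]
    rw [le_div_iff₀ (mul_pos (Real.exp_pos 1) hpos), one_mul]
    have := Real.add_one_le_exp (h - 1)
    calc Real.exp 1 * h ≤ Real.exp 1 * Real.exp (h - 1) := by
          apply mul_le_mul_of_nonneg_left _ (Real.exp_pos 1).le
          linarith
      _ = Real.exp h := by rw [← Real.exp_add]; ring_nf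
  obtain ⟨hu1, hu2⟩ := hu y hy0
  obtain ⟨hU1, hU2⟩ := hU y hy0
  refine ⟨hpos, hlt1, hHgt, ?_, ?_⟩
  · apply fmono.injOn (Set.mem_Icc.2 ⟨hu1.1.le, hu1.2⟩) (Set.mem_Icc.2 ⟨hpos.le, hlt1.le⟩)
    simp only
    rw [hu2, hfy]
  · apply fanti.injOn hU1 (Set.mem_Ici.2 hHgt.le)
    simp only
    rw [hU2, hfy, hHeq]
    have hsplit : Real.exp (1 - (h + x)) = Real.exp (1 - h) * Real.exp (-x) := by
      rw [← Real.exp_add]; ring_nf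
    rw [hsplit, Real.exp_neg, hfx]
    have hinv : Real.exp x * (Real.exp x)⁻¹ = 1 := mul_inv_cancel₀ (ne_of_gt (Real.exp_pos x))
    linear_combination (-(h * Real.exp (1 - h))) * hinv
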